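/- Let α ∈ ℝ, μ ∈ ℂ, n a natural number, and let p be a nonzero polynomial of degree n such that ψ(x) = e^{-x²/2} x^{α+1/2} p(x²) satisfies -ψ''(x) + (x² + (4α² - 1)/(4x²)) ψ(x) = μ ψ(x) for all x > 0. Then μ = 2(2n + 1 + α). In particular, the energy levels of the closed Hořava–Lifshitz FLRW universe are quantized as E_n = (2n + 1 + α) ω - g_r, where μ = 2(E + g_r)/ω. -/

import Mathlib

open Polynomial

/-- The polynomial operator implementing one derivative of the shape function. -/
noncomputable def Dop (β : ℝ) (q : Polynomial ℝ) : Polynomial ℝ :=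
  C β * q + X * (2 * q.derivative - q)

lemma shape_hasDerivAt (β : ℝ) (q : Polynomial ℝ) {x : ℝ} (hx : 0 < x) :
    HasDerivAt (fun y : ℝ => Real.exp (-y^2/2) * y ^ β * q.eval (y^2))
      (Real.exp (-x^2/2) * x ^ (β-1) * (Dop β q).eval (x^2)) x := by
  have h1 : HasDerivAt (fun y : ℝ => Real.exp (-y^2/2)) (-x * Real.exp (-x^2/2)) x := by
    have : HasDerivAt (fun y : ℝ => -y^2/2) (-x) x := by
      have h := ((hasDerivAt_pow 2 x).neg.div_const 2)
      convert h using 1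
      all_goals first | rfl | ring
    simpa [mul_comm] using this.exp
  have h2 : HasDerivAt (fun y : ℝ => y ^ β) (β * x ^ (β-1)) x :=
    Real.hasDerivAt_rpow_const (Or.inl hx.ne')
  have h3 : HasDerivAt (fun y : ℝ => q.eval (y^2)) (q.derivative.eval (x^2) * (2*x)) x := by
    have := (q.hasDerivAt (x^2)).comp x (by simpa using (hasDerivAt_pow 2 x) : HasDerivAt (fun y : ℝ => y^2) (2*x) x)
    exact this
  have h := (h1.mul h2).mul h3
  convert h using 1
  all_goals try rfl
  have hxb : x ^ β = x ^ (β-1) * x := by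
    rw [← Real.rpow_add_one hx.ne' (β-1)]; ring_nf
  simp only [Dop, eval_add, eval_mul, eval_C, eval_X, eval_sub, eval_ofNat, Pi.mul_apply]
  rw [hxb]
  ring

lemma coeff_X_mul_derivative (p : Polynomial ℝ) (n : ℕ) :
    (X * p.derivative).coeff n = n * p.coeff n := by
  cases n with
  | zero => simp [coeff_zero_eq_eval_zero]
  | succ m => rw [coeff_X_mul, coeff_derivative]; push_cast; ring

lemma Dop_Dop (β : ℝ) (p : Polynomial ℝ) :
    Dop (β-1) (Dop β p) = C (β*(β-1)) * p + C (4*β+2) * X * p.derivative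
      - C (2*β+1) * X * p + 4 * X^2 * p.derivative.derivative
      - 4 * X^2 * p.derivative + X^2 * p := by
  simp only [Dop, derivative_add, derivative_sub, derivative_mul, derivative_C, derivative_X,
    derivative_ofNat, map_ofNat, map_sub, map_add, map_mul, map_one, C_1]
  ring

/-- If `p` is a nonzero polynomial of degree `n` and `ψ(x) = e^{-x²/2} x^{α+1/2} p(x²)`
satisfies `-ψ'' + (x² + (4α² - 1)/(4x²)) ψ = μ ψ` on `(0,∞)`, then
`μ = 2(2n + 1 + α)`.  In particular, the energy levels of the closed Hořava–Lifshitz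
FLRW universe are quantized: if `μ = 2(E + g_r)/ω` with `ω > 0`, then
`E = (2n + 1 + α) ω - g_r`. -/
theorem eigenvalue_quantization (α : ℝ) (μ : ℂ) (n : ℕ) (p : Polynomial ℝ)
    (hp : p.degree = n)
    (ψ : ℝ → ℂ)
    (hψ : ∀ x : ℝ, ψ x = Complex.exp (-(x:ℂ)^2/2) * ((x ^ (α + 1/2) : ℝ) : ℂ)
        * ((p.eval (x^2) : ℝ) : ℂ))
    (heq : ∀ x > (0:ℝ),
      -(deriv (deriv ψ) x) + ((x:ℂ)^2 + (4*(α:ℂ)^2 - 1)/(4*(x:ℂ)^2)) * ψ x = μ * ψ x) :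
    μ = 2*(2*(n:ℂ) + 1 + (α:ℂ)) ∧
      ∀ ω gr E : ℝ, 0 < ω → μ = ((2*(E + gr)/ω : ℝ) : ℂ) →
        E = (2*n + 1 + α)*ω - gr := by
  set β : ℝ := α + 1/2 with hβ
  -- ψ as coercion of a real function
  have hψg : ψ = fun x : ℝ => ((Real.exp (-x^2/2) * x ^ β * p.eval (x^2) : ℝ) : ℂ) := by
    funext x
    rw [hψ x]
    push_cast
    ring
  -- first derivative of ψ on (0,∞)
  have hd1 : ∀ x ∈ Set.Ioi (0:ℝ), deriv ψ x
      = ((Real.exp (-x^2/2) * x ^ (β-1) * (Dop β p).eval (x^2) : ℝ) : ℂ) := by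
    intro x hx
    rw [hψg]
    exact ((shape_hasDerivAt β p hx).ofReal_comp).deriv
  -- second derivative of ψ on (0,∞)
  have hd2 : ∀ x ∈ Set.Ioi (0:ℝ), deriv (deriv ψ) x
      = ((Real.exp (-x^2/2) * x ^ (β-1-1) * (Dop (β-1) (Dop β p)).eval (x^2) : ℝ) : ℂ) := by
    intro x hx
    have hev : deriv ψ =ᶠ[nhds x]
        (fun y : ℝ => ((Real.exp (-y^2/2) * y ^ (β-1) * (Dop β p).eval (y^2) : ℝ) : ℂ)) := by
      filter_upwards [isOpen_Ioi.mem_nhds hx] with y hy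
      exact hd1 y hy
    have := ((shape_hasDerivAt (β-1) (Dop β p) hx).ofReal_comp).congr_of_eventuallyEq hev
    exact this.deriv
  -- the key pointwise polynomial relation
  set R : Polynomial ℝ := X^2*p + C (β*(β-1)) * p - Dop (β-1) (Dop β p) with hRdef
  have hmain : ∀ t > (0:ℝ), ((R.eval t : ℝ) : ℂ) = μ * (((X*p).eval t : ℝ) : ℂ) := by
    intro t ht
    set x : ℝ := Real.sqrt t with hxdef
    have hx : 0 < x := Real.sqrt_pos.mpr ht
    have hx2 : x^2 = t := Real.sq_sqrt ht.le
    have h := heq x hx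
    rw [hd2 x hx, hψg] at h
    simp only at h
    have hsplit : x ^ β = x ^ (β-1-1) * x^2 := by
      rw [show x^2 = x ^ ((2:ℕ):ℝ) by rw [Real.rpow_natCast],
        ← Real.rpow_add hx]
      congr 1
      ring
    rw [hsplit, hx2] at h
    have hE0 : (Real.exp (-t/2) * x ^ (β-1-1) : ℝ) ≠ 0 := by positivity
    have hE : ((Real.exp (-t/2) * x ^ (β-1-1) : ℝ) : ℂ) ≠ 0 :=
      Complex.ofReal_ne_zero.mpr hE0
    have ht0 : (t:ℂ) ≠ 0 := by exact_mod_cast ht.ne'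
    have hxt : (x:ℂ)^2 = (t:ℂ) := by exact_mod_cast hx2
    rw [hxt] at h
    have hββ : β*(β-1) = α^2 - 1/4 := by rw [hβ]; ring
    -- clear denominators and cancel the exponential factor
    have key : ((Real.exp (-t/2) * x ^ (β-1-1) : ℝ) : ℂ) * ((R.eval t : ℝ) : ℂ)
        = ((Real.exp (-t/2) * x ^ (β-1-1) : ℝ) : ℂ) * (μ * (((X*p).eval t : ℝ) : ℂ)) := by
      have h4t : (4*(t:ℂ)) ≠ 0 := by
        simp [ht0]
      apply mul_left_cancel₀ h4t
      simp only [hRdef, eval_sub, eval_add, eval_mul, eval_pow, eval_C, eval_X]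
      rw [hββ]
      push_cast
      field_simp at h
      push_cast [neg_div] at h ⊢
      linear_combination h
    exact mul_left_cancel₀ hE key
  -- p is nonzero
  have hp0 : p ≠ 0 := fun h0 => by simp [h0] at hp
  have hXp : X * p ≠ 0 := mul_ne_zero X_ne_zero hp0
  -- imaginary part of μ vanishes
  have him : μ.im = 0 := by
    obtain ⟨t, ht1, ht2⟩ :=
      ((Set.Ioi_infinite (0:ℝ)).diff (Polynomial.finite_setOf_isRoot hXp)).nonempty
    have heval : (X*p).eval t ≠ 0 := ht2
    have h := congrArg Complex.im (hmain t ht1)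
    simp only [Complex.ofReal_im, Complex.mul_im, Complex.ofReal_re, mul_zero, zero_add] at h
    exact (mul_eq_zero.mp h.symm).resolve_right heval
  -- real part: polynomial identity
  have hpoly : R = C μ.re * (X * p) := by
    apply eq_of_infinite_eval_eq
    apply Set.Infinite.mono _ (Set.Ioi_infinite (0:ℝ))
    intro t ht
    have h := congrArg Complex.re (hmain t ht)
    simp [Complex.mul_re] at h
    simp [h, him]
  -- extract coefficient n+1
  have hn : p.natDegree = n := natDegree_eq_of_degree_eq_some hp
  have hc : p.coeff n ≠ 0 := by
    rw [← hn]; exact fun h => hp0 (leadingCoeff_eq_zero.mp h)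
  have hcn1 : p.coeff (n+1) = 0 := coeff_eq_zero_of_natDegree_lt (by omega)
  have hR2 : R = C (2*β+1) * X * p + 4*X^2*p.derivative
      - C (4*β+2) * X * p.derivative - 4*X^2*p.derivative.derivative := by
    rw [hRdef, Dop_Dop]; ring
  have hcoeff := congrArg (fun q : Polynomial ℝ => q.coeff (n+1)) hpoly
  rw [hR2] at hcoeff
  simp only [coeff_sub, coeff_add] at hcoeff
  have e1 : (C (2*β+1) * X * p).coeff (n+1) = (2*β+1) * p.coeff n := by
    rw [mul_assoc, coeff_C_mul, coeff_X_mul]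
  have e2 : ((4:ℝ[X])*X^2*p.derivative).coeff (n+1) = 4 * (n * p.coeff n) := by
    have : (4:ℝ[X])*X^2*p.derivative = C 4 * (X * (X * p.derivative)) := by
      rw [show ((4:ℝ[X]) = C 4) from (map_ofNat C 4).symm]; ring
    rw [this, coeff_C_mul, coeff_X_mul, coeff_X_mul_derivative]
  have e3 : (C (4*β+2) * X * p.derivative).coeff (n+1) = 0 := by
    rw [mul_assoc, coeff_C_mul, coeff_X_mul, coeff_derivative, hcn1]
    ring
  have e4 : ((4:ℝ[X])*X^2*p.derivative.derivative).coeff (n+1) = 0 := by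
    have : (4:ℝ[X])*X^2*p.derivative.derivative = C 4 * (X * (X * p.derivative.derivative)) := by
      rw [show ((4:ℝ[X]) = C 4) from (map_ofNat C 4).symm]; ring
    rw [this, coeff_C_mul, coeff_X_mul, coeff_X_mul_derivative, coeff_derivative, hcn1]
    ring
  have e5 : (C μ.re * (X * p)).coeff (n+1) = μ.re * p.coeff n := by
    rw [coeff_C_mul, coeff_X_mul]
  rw [e1, e2, e3, e4, e5] at hcoeff
  have hre : μ.re = 4*n + 2*β + 1 := by
    have h2 : ((2*β+1) + 4*n - μ.re) * p.coeff n = 0 := by linarith [hcoeff]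
    rcases mul_eq_zero.mp h2 with h | h
    · linarith
    · exact absurd h hc
  have hμ : μ = 2*(2*(n:ℂ) + 1 + (α:ℂ)) := by
    have hμr : μ = (μ.re : ℂ) := Complex.ext rfl (by simp [him])
    rw [hμr, hre, hβ]
    push_cast
    ring
  refine ⟨hμ, ?_⟩
  intro ω gr E hω hμE
  rw [hμ] at hμE
  have : ((2*(E + gr)/ω : ℝ) : ℂ) = ((2*(2*(n:ℝ) + 1 + α) : ℝ) : ℂ) := by
    rw [← hμE]; push_cast; ring
  have hreal : 2*(E + gr)/ω = 2*(2*(n:ℝ) + 1 + α) := by exact_mod_cast this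
  field_simp at hreal
  linarith
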